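/- Consider the skip-free algorithm applied to a finite recurrent MDP on S that is skip-free in the negative direction on the tree, producing sequences of policies d_n and values g_n. Then for every n: g_n = g(d_n), and either g_{n+1} < g_n (so d_{n+1} is a strict improvement on d_n), or g_{n+1} = g_n; in the latter case g_{n+1} = min over all stationary deterministic policies d' of g(d'), d_{n+1} is an average cost optimal policy, and the pair (g_{n+1}, h), where h_0 = 0 and h_j = ∑_{i∈Δ(0,j)} y_i for j ≠ 0 (with y the values computed at that iteration), satisfies the average cost optimality equations h_i = min_{a∈A} { c_i(a) − g + ∑_{j∈S} p_{ij}(a) h_j }. -/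

import Mathlib

open Finset Filter

noncomputable section

/-- A rooted tree structure on a state space `S`: a root, a parent map fixing the root,
such that iterating the parent map from any state reaches the root. -/
structure SFTree (S : Type*) where
  root : S
  parent : S → S
  parent_root : parent root = root
  reaches_root : ∀ i : S, ∃ n : ℕ, parent^[n] i = root

namespace SFTree

variable {S : Type*} [Fintype S] [DecidableEq S]

open Classical in
/-- The set of descendants of `i`: states `j ≠ i` whose path to the root passes through `i`. -/
def desc (T : SFTree S) (i : S) : Finset S :=
  Finset.univ.filter fun j => j ≠ i ∧ ∃ n : ℕ, T.parent^[n] j = i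

open Classical in
/-- The subtree rooted at `i`: `i` together with its descendants. -/
def subtree (T : SFTree S) (i : S) : Finset S :=
  Finset.univ.filter fun j => ∃ n : ℕ, T.parent^[n] j = i

open Classical in
/-- The states strictly after `i` on the path from `i` to `j`. -/
def delta (T : SFTree S) (i j : S) : Finset S :=
  Finset.univ.filter fun r =>
    r ≠ i ∧ (∃ n : ℕ, T.parent^[n] j = r) ∧ (∃ m : ℕ, T.parent^[m] r = i)

end SFTree

/-- A finite Markov decision process: costs and transition probabilities. -/
structure MDP (S A : Type*) [Fintype S] where
  c : S → A → ℝ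
  p : S → A → S → ℝ
  p_nonneg : ∀ i a j, 0 ≤ p i a j
  p_sum_one : ∀ i a, ∑ j, p i a j = 1

namespace MDP

variable {S A : Type*} [Fintype S] [DecidableEq S]

/-- Tail probability: the probability of jumping from `i` into the subtree rooted at `k`. -/
def ptail (M : MDP S A) (T : SFTree S) (i : S) (a : A) (k : S) : ℝ :=
  ∑ s ∈ T.subtree k, M.p i a s

/-- Skip-free in the negative direction on the tree `T`: from `i ≠ root` the only possible
transitions are to the parent of `i` or into the subtree rooted at `i`. -/
def IsSkipFree (M : MDP S A) (T : SFTree S) : Prop :=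
  ∀ i, i ≠ T.root → ∀ a j, M.p i a j ≠ 0 → j = T.parent i ∨ j ∈ T.subtree i

/-- Transition matrix of the stationary deterministic policy `d`. -/
def Pmat (M : MDP S A) (d : S → A) : Matrix S S ℝ :=
  Matrix.of fun i j => M.p i (d i) j

/-- Cost vector of the stationary deterministic policy `d`. -/
def cvec (M : MDP S A) (d : S → A) : S → ℝ := fun i => M.c i (d i)

/-- Expected average cost of the stationary deterministic policy `d` starting from `i`. -/
def avgCost (M : MDP S A) (d : S → A) (i : S) : ℝ :=
  Filter.limsup
    (fun n : ℕ => (n : ℝ)⁻¹ * ∑ t ∈ Finset.range n, ((M.Pmat d ^ t).mulVec (M.cvec d)) i)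
    Filter.atTop

end MDP

/-- A (substochastic) matrix is irreducible if every state can reach every other state
in a positive number of steps. -/
def MatIrreducible {S : Type*} [Fintype S] [DecidableEq S] (P : Matrix S S ℝ) : Prop :=
  ∀ i j, ∃ n : ℕ, 0 < n ∧ 0 < (P ^ n) i j

/-- A recurrent model: every stationary deterministic policy has an irreducible
transition matrix. -/
def IsRecurrentModel {S A : Type*} [Fintype S] [DecidableEq S] (M : MDP S A) : Prop :=
  ∀ d : S → A, MatIrreducible (M.Pmat d)

/-- The probability weight of a path of length `n`. -/
def pathWt {S : Type*} [Fintype S] (P : Matrix S S ℝ) {n : ℕ} (x : Fin (n + 1) → S) : ℝ :=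
  ∏ t : Fin n, P (x t.castSucc) (x t.succ)

open Classical in
/-- `E[f(X_n); τ > n]` for the chain with matrix `P` started at `z`, where `τ` is the
first-return epoch to `z` (the first time the chain enters `z` from a state `≠ z`). -/
def retTerm {S : Type*} [Fintype S] (P : Matrix S S ℝ) (z : S) (f : S → ℝ) (n : ℕ) : ℝ :=
  ∑ x ∈ Finset.univ.filter
      (fun (x : Fin (n + 1) → S) =>
        x 0 = z ∧ ∀ t : Fin n, ¬(x t.castSucc ≠ z ∧ x t.succ = z)),
    pathWt P x * f (x (Fin.last n))

/-- `E[∑_{t=0}^{τ-1} f(X_t)]` for the chain with matrix `P` started at `z`, where `τ` is the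
first-return epoch to `z`. -/
def retSum {S : Type*} [Fintype S] (P : Matrix S S ℝ) (z : S) (f : S → ℝ) : ℝ :=
  ∑' n : ℕ, retTerm P z f n

open Classical in
/-- `E[f(X_n); σ > n]` for the chain with matrix `P` started at `i`, where `σ` is the
first-passage epoch to `z`, `σ = min {t > 0 : X_t = z}`. -/
def passTerm {S : Type*} [Fintype S] (P : Matrix S S ℝ) (i z : S) (f : S → ℝ) (n : ℕ) : ℝ :=
  ∑ x ∈ Finset.univ.filter
      (fun (x : Fin (n + 1) → S) => x 0 = i ∧ ∀ t : Fin n, x t.succ ≠ z),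
    pathWt P x * f (x (Fin.last n))

/-- `E[∑_{t=0}^{σ-1} f(X_t)]` for the chain with matrix `P` started at `i`, where `σ` is the
first-passage epoch to `z`. -/
def passSum {S : Type*} [Fintype S] (P : Matrix S S ℝ) (i z : S) (f : S → ℝ) : ℝ :=
  ∑' n : ℕ, passTerm P i z f n

end


set_option linter.unusedSectionVars false
set_option linter.unusedVariables false
set_option maxHeartbeats 1000000

noncomputable section AuxLemmas

namespace SFTree
variable {S : Type*} [Fintype S] [DecidableEq S]
variable (T : SFTree S)
-- auxiliary lemmas
variable (T : SFTree S)

lemma mem_subtree {i j : S} : j ∈ T.subtree i ↔ ∃ n : ℕ, T.parent^[n] j = i := by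
  classical simp [subtree]

lemma mem_desc {i j : S} : j ∈ T.desc i ↔ j ≠ i ∧ ∃ n : ℕ, T.parent^[n] j = i := by
  classical simp [desc]

lemma mem_delta {i j r : S} :
    r ∈ T.delta i j ↔ r ≠ i ∧ (∃ n : ℕ, T.parent^[n] j = r) ∧ (∃ m : ℕ, T.parent^[m] r = i) := by
  classical simp [delta]

lemma iterate_root (n : ℕ) : T.parent^[n] T.root = T.root := by
  induction n with
  | zero => rfl
  | succ n ih => rw [Function.iterate_succ_apply', ih, T.parent_root]

lemma no_cycle {i : S} (hi : i ≠ T.root) {n : ℕ} (hn : 0 < n) : T.parent^[n] i ≠ i := by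
  intro hcyc
  obtain ⟨N, hN⟩ := T.reaches_root i
  have hmul : ∀ k : ℕ, T.parent^[n * k] i = i := by
    intro k
    induction k with
    | zero => rfl
    | succ k ih =>
      rw [Nat.mul_succ, Function.iterate_add_apply, hcyc, ih]
  have hge : N ≤ n * N := Nat.le_mul_of_pos_left N hn
  have : T.parent^[n * N] i = T.root := by
    have := Function.iterate_add_apply T.parent (n * N - N) N i
    rw [Nat.sub_add_cancel hge] at this
    rw [this, hN, T.iterate_root]
  exact hi ((hmul N ▸ this : i = T.root))

lemma subtree_root : T.subtree T.root = Finset.univ := by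
  apply Finset.eq_univ_of_forall
  intro j
  exact (T.mem_subtree).2 (T.reaches_root j)

lemma parent_not_mem_subtree {i : S} (hi : i ≠ T.root) : T.parent i ∉ T.subtree i := by
  rw [mem_subtree]
  rintro ⟨m, hm⟩
  have : T.parent^[m + 1] i = i := by
    rw [Function.iterate_add_apply]
    simpa using hm
  exact T.no_cycle hi (Nat.succ_pos m) this

lemma root_not_mem_desc (i : S) : T.root ∉ T.desc i := by
  rw [mem_desc]
  rintro ⟨hne, n, hn⟩
  rw [T.iterate_root] at hn
  exact hne hn

lemma ne_root_of_mem_desc {i k : S} (hk : k ∈ T.desc i) : k ≠ T.root := by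
  rintro rfl; exact T.root_not_mem_desc i hk

lemma delta_root_root : T.delta T.root T.root = ∅ := by
  ext r
  simp only [mem_delta, Finset.notMem_empty, iff_false]
  rintro ⟨hne, ⟨n, hn⟩, -⟩
  rw [T.iterate_root] at hn
  exact hne hn.symm

lemma root_not_mem_delta (i j : S) : T.root ∉ T.delta i j ∨ i ≠ T.root := by
  by_cases h : i = T.root
  · left; rw [mem_delta]; rintro ⟨hne, -⟩; exact hne h.symm
  · right; exact h

lemma self_mem_delta_root {i : S} (hi : i ≠ T.root) : i ∈ T.delta T.root i := by
  rw [mem_delta]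
  exact ⟨hi, ⟨0, rfl⟩, T.reaches_root i⟩

lemma delta_root_parent {i : S} (hi : i ≠ T.root) :
    T.delta T.root (T.parent i) = (T.delta T.root i).erase i := by
  ext r
  rw [Finset.mem_erase, mem_delta, mem_delta]
  constructor
  · rintro ⟨hne, ⟨n, hn⟩, hr⟩
    have hni : T.parent^[n + 1] i = r := by
      rw [Function.iterate_add_apply]; simpa using hn
    refine ⟨?_, hne, ⟨n + 1, hni⟩, hr⟩
    rintro rfl
    exact T.no_cycle hi (Nat.succ_pos n) hni
  · rintro ⟨hri, hne, ⟨n, hn⟩, hr⟩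
    match n, hn with
    | 0, hn => exact absurd hn.symm hri
    | (m+1), hn =>
      refine ⟨hne, ⟨m, ?_⟩, hr⟩
      rw [← hn, Function.iterate_succ_apply]

lemma path_compare {j r i : S} {n m : ℕ} (h1 : T.parent^[n] j = r) (h2 : T.parent^[m] j = i) :
    (∃ q : ℕ, T.parent^[q] r = i) ∨ (∃ q : ℕ, T.parent^[q] i = r) := by
  rcases le_or_gt n m with h | h
  · left
    refine ⟨m - n, ?_⟩
    rw [← h1, ← Function.iterate_add_apply, Nat.sub_add_cancel h]
    exact h2
  · right
    refine ⟨n - m, ?_⟩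
    rw [← h2, ← Function.iterate_add_apply, Nat.sub_add_cancel h.le]
    exact h1

lemma swap_cond {i j k : S} :
    (j ∈ T.subtree i ∧ k ∈ T.delta i j) ↔ (k ∈ T.desc i ∧ j ∈ T.subtree k) := by
  rw [mem_subtree, mem_delta, mem_desc, mem_subtree]
  constructor
  · rintro ⟨-, hki, hpath, hreach⟩
    exact ⟨⟨hki, hreach⟩, hpath⟩
  · rintro ⟨⟨hki, m, hm⟩, n, hn⟩
    refine ⟨⟨m + n, ?_⟩, hki, ⟨n, hn⟩, ⟨m, hm⟩⟩
    rw [Function.iterate_add_apply, hn, hm]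

lemma delta_split {i j : S} (hi : i ≠ T.root) (hj : j ∈ T.subtree i) (w : S → ℝ) :
    ∑ k ∈ T.delta T.root j, w k = (∑ k ∈ T.delta i j, w k) + ∑ k ∈ T.delta T.root i, w k := by
  obtain ⟨n0, hn0⟩ := T.mem_subtree.1 hj
  rw [← Finset.sum_union]
  · congr 1
    ext r
    rw [Finset.mem_union, mem_delta, mem_delta, mem_delta]
    constructor
    · rintro ⟨hr, ⟨n, hn⟩, hreach⟩
      rcases T.path_compare hn hn0 with ⟨q, hq⟩ | ⟨q, hq⟩
      · by_cases hri : r = i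
        · right
          subst hri
          exact ⟨hr, ⟨0, rfl⟩, T.reaches_root r⟩
        · left; exact ⟨hri, ⟨n, hn⟩, ⟨q, hq⟩⟩
      · right; exact ⟨hr, ⟨q, hq⟩, T.reaches_root r⟩
    · rintro (⟨hri, ⟨n, hn⟩, hq⟩ | ⟨hr, ⟨n, hn⟩, hreach⟩)
      · refine ⟨?_, ⟨n, hn⟩, T.reaches_root r⟩
        rintro rfl
        obtain ⟨q, hq⟩ := hq
        rw [T.iterate_root] at hq
        exact hi hq.symm
      · refine ⟨hr, ⟨n + n0, ?_⟩, T.reaches_root r⟩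
        rw [Function.iterate_add_apply, hn0, hn]
  · rw [Finset.disjoint_left]
    intro r hr1 hr2
    obtain ⟨hri, -, m, hm⟩ := T.mem_delta.1 hr1
    obtain ⟨-, ⟨q, hq⟩, -⟩ := T.mem_delta.1 hr2
    -- parent^[m] r = i, parent^[q] i = r, r ≠ i
    have hcyc : T.parent^[q + m] r = r := by
      rw [Function.iterate_add_apply, hm, hq]
    have hqm : 0 < q + m := by
      rcases Nat.eq_zero_or_pos (q + m) with h | h
      · obtain ⟨hq0, hm0⟩ := Nat.add_eq_zero.1 h
        subst hm0
        exact absurd hm hri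
      · exact h
    have hrroot : r ≠ T.root := by
      rintro rfl
      rw [T.iterate_root] at hm
      exact hi hm.symm
    exact T.no_cycle hrroot hqm hcyc

lemma desc_ssubset {i k : S} (hk : k ∈ T.desc i) : T.desc k ⊂ T.desc i := by
  obtain ⟨hki, m, hm⟩ := T.mem_desc.1 hk
  have hkroot : k ≠ T.root := T.ne_root_of_mem_desc hk
  constructor
  · intro j hj
    obtain ⟨hjk, n, hn⟩ := T.mem_desc.1 hj
    have hnpos : 0 < n := by
      rcases Nat.eq_zero_or_pos n with h | h
      · subst h; exact absurd hn hjk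
      · exact h
    refine T.mem_desc.2 ⟨?_, ⟨m + n, ?_⟩⟩
    · rintro rfl
      -- parent^[n] j = k, parent^[m] k = j : cycle at k
      have : T.parent^[n + m] k = k := by
        rw [Function.iterate_add_apply, hm, hn]
      exact T.no_cycle hkroot (Nat.add_pos_left hnpos m) this
    · rw [Function.iterate_add_apply, hn, hm]
  · intro hsub
    have := hsub hk
    exact (T.mem_desc.1 this).1 rfl


end SFTree

namespace SFAux
open SFTree
variable {S A : Type*} [Fintype S] [DecidableEq S] [Nonempty S]

lemma pow_entry_nonneg {P : Matrix S S ℝ} (hP : ∀ i j, 0 ≤ P i j) (n : ℕ) :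
    ∀ i j, 0 ≤ (P ^ n) i j := by
  induction n with
  | zero => intro i j; by_cases h : i = j <;> simp [Matrix.one_apply, h]
  | succ n ih =>
    intro i j
    rw [pow_succ, Matrix.mul_apply]
    exact Finset.sum_nonneg fun k _ => mul_nonneg (ih i k) (hP k j)

lemma pow_row_sum {P : Matrix S S ℝ} (hP1 : ∀ i, ∑ j, P i j = 1) (n : ℕ) :
    ∀ i, ∑ j, (P ^ n) i j = 1 := by
  induction n with
  | zero => intro i; simp [Matrix.one_apply]
  | succ n ih =>
    intro i
    simp only [pow_succ, Matrix.mul_apply]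
    rw [Finset.sum_comm]
    calc ∑ k, ∑ j, (P ^ n) i k * P k j = ∑ k, (P ^ n) i k * ∑ j, P k j := by
          simp [Finset.mul_sum]
      _ = 1 := by simp only [hP1, mul_one]; exact ih i

lemma mulVec_abs_le {Q : Matrix S S ℝ} (hQ : ∀ i j, 0 ≤ Q i j) (hQ1 : ∀ i, ∑ j, Q i j = 1)
    {h : S → ℝ} {C : ℝ} (hC : ∀ j, |h j| ≤ C) (i : S) : |Q.mulVec h i| ≤ C := by
  have : |Q.mulVec h i| ≤ ∑ j, Q i j * C := by
    rw [Matrix.mulVec, dotProduct]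
    refine (Finset.abs_sum_le_sum_abs _ _).trans ?_
    refine Finset.sum_le_sum fun j _ => ?_
    rw [abs_mul, abs_of_nonneg (hQ i j)]
    exact mul_le_mul_of_nonneg_left (hC j) (hQ i j)
  calc |Q.mulVec h i| ≤ ∑ j, Q i j * C := this
    _ = C := by rw [← Finset.sum_mul, hQ1 i, one_mul]

lemma mulVec_mono {Q : Matrix S S ℝ} (hQ : ∀ i j, 0 ≤ Q i j) {v w : S → ℝ}
    (hvw : ∀ j, v j ≤ w j) (i : S) : Q.mulVec v i ≤ Q.mulVec w i := by
  simp only [Matrix.mulVec, dotProduct]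
  exact Finset.sum_le_sum fun j _ => mul_le_mul_of_nonneg_left (hvw j) (hQ i j)

lemma mulVec_const {Q : Matrix S S ℝ} (hQ1 : ∀ i, ∑ j, Q i j = 1) (x : ℝ) (i : S) :
    Q.mulVec (fun _ => x) i = x := by
  simp only [Matrix.mulVec, dotProduct]
  rw [← Finset.sum_mul, hQ1 i, one_mul]

lemma mulVec_apply (M : Matrix S S ℝ) (v : S → ℝ) (i : S) :
    M.mulVec v i = ∑ j, M i j * v j := rfl

lemma mulVec_indicator {Q : Matrix S S ℝ} (z : S) (i : S) :
    Q.mulVec (fun j => if j = z then (1:ℝ) else 0) i = Q i z := by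
  simp only [Matrix.mulVec, dotProduct, mul_ite, mul_one, mul_zero]
  simp

/-- partial sums: equality version -/
lemma partial_sum_eq {P : Matrix S S ℝ} (hP1 : ∀ i, ∑ j, P i j = 1)
    {c H : S → ℝ} {x : ℝ} (hc : ∀ i, c i = x + H i - P.mulVec H i) (n : ℕ) (i : S) :
    (∑ t ∈ Finset.range n, (P ^ t).mulVec c i) = n * x + H i - (P ^ n).mulVec H i := by
  induction n with
  | zero => simp [Matrix.mulVec, dotProduct, Matrix.one_apply]
  | succ n ih =>
    rw [Finset.sum_range_succ, ih]
    set PH := P.mulVec H with hPH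
    have hsplit : (P ^ n).mulVec c i
        = (P ^ n).mulVec (fun _ => x) i + (P ^ n).mulVec H i - (P ^ n).mulVec PH i := by
      simp only [Matrix.mulVec, dotProduct]
      rw [← Finset.sum_add_distrib, ← Finset.sum_sub_distrib]
      refine Finset.sum_congr rfl fun j _ => ?_
      rw [hc j]; ring
    have hPP : (P ^ n).mulVec PH i = (P ^ (n+1)).mulVec H i := by
      rw [hPH, Matrix.mulVec_mulVec, ← pow_succ]
    rw [hsplit, mulVec_const (pow_row_sum hP1 n), hPP]
    push_cast
    ring

/-- partial sums: inequality version with extra indicator term -/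
lemma partial_sum_ge {P : Matrix S S ℝ} (hP : ∀ i j, 0 ≤ P i j) (hP1 : ∀ i, ∑ j, P i j = 1)
    {c H : S → ℝ} {x uu : ℝ} (z : S)
    (hc : ∀ i, x + H i - P.mulVec H i + uu * (if i = z then 1 else 0) ≤ c i) (n : ℕ) (i : S) :
    n * x + H i - (P ^ n).mulVec H i + uu * ∑ t ∈ Finset.range n, (P ^ t) i z
      ≤ ∑ t ∈ Finset.range n, (P ^ t).mulVec c i := by
  induction n with
  | zero => simp [Matrix.mulVec, dotProduct, Matrix.one_apply]
  | succ n ih =>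
    rw [Finset.sum_range_succ, Finset.sum_range_succ]
    set PH := P.mulVec H with hPH
    have hle : (P ^ n).mulVec
        (fun j => x + H j - PH j + uu * (if j = z then 1 else 0)) i
        ≤ (P ^ n).mulVec c i :=
      mulVec_mono (pow_entry_nonneg hP n) (fun j => by rw [hPH]; exact hc j) i
    have hcalc : (P ^ n).mulVec
        (fun j => x + H j - PH j + uu * (if j = z then 1 else 0)) i
        = x + (P ^ n).mulVec H i - (P ^ (n+1)).mulVec H i + uu * (P ^ n) i z := by
      have hPP : (P ^ n).mulVec PH i = (P ^ (n+1)).mulVec H i := by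
        rw [hPH, Matrix.mulVec_mulVec, ← pow_succ]
      have hx : (P ^ n).mulVec (fun _ => x) i = x := mulVec_const (pow_row_sum hP1 n) x i
      have hzz : (P ^ n).mulVec (fun j => if j = z then (1:ℝ) else 0) i = (P ^ n) i z :=
        mulVec_indicator z i
      rw [mulVec_apply]
      calc ∑ j, (P ^ n) i j * (x + H j - PH j + uu * (if j = z then 1 else 0))
          = ∑ j, ((P ^ n) i j * x + (P ^ n) i j * H j - (P ^ n) i j * PH j
              + uu * ((P ^ n) i j * (if j = z then 1 else 0))) :=
            Finset.sum_congr rfl fun j _ => by ring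
        _ = (∑ j, (P ^ n) i j * x) + (∑ j, (P ^ n) i j * H j) - (∑ j, (P ^ n) i j * PH j)
              + ∑ j, uu * ((P ^ n) i j * (if j = z then 1 else 0)) := by
            rw [Finset.sum_add_distrib, Finset.sum_sub_distrib, Finset.sum_add_distrib]
        _ = x + (P ^ n).mulVec H i - (P ^ (n+1)).mulVec H i + uu * (P ^ n) i z := by
            rw [← Finset.mul_sum, ← mulVec_apply, ← mulVec_apply, ← mulVec_apply, ← mulVec_apply,
              hPP, hx, hzz]
    calc (↑(n+1) : ℝ) * x + H i - (P ^ (n+1)).mulVec H i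
          + uu * (∑ t ∈ Finset.range n, (P ^ t) i z + (P ^ n) i z)
        = (n * x + H i - (P ^ n).mulVec H i + uu * ∑ t ∈ Finset.range n, (P ^ t) i z)
          + (x + (P ^ n).mulVec H i - (P ^ (n+1)).mulVec H i + uu * (P ^ n) i z) := by
          push_cast; ring
      _ ≤ ∑ t ∈ Finset.range n, (P ^ t).mulVec c i + (P ^ n).mulVec c i :=
          add_le_add ih (hcalc ▸ hle)


lemma le_limsup_of (v : ℕ → ℝ) (B : ℝ) (hB : ∀ n, v n ≤ B)
    (x : ℝ) (h : ∀ ε : ℝ, 0 < ε → ∀ᶠ n in atTop, x - ε ≤ v n) :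
    x ≤ Filter.limsup v Filter.atTop := by
  have hbdd : Filter.IsBoundedUnder (· ≤ ·) Filter.atTop v :=
    Filter.isBoundedUnder_of ⟨B, hB⟩
  have key : ∀ ε : ℝ, 0 < ε → x - ε ≤ Filter.limsup v Filter.atTop := fun ε hε =>
    Filter.le_limsup_of_frequently_le ((h ε hε).frequently) hbdd
  by_contra hlt
  push_neg at hlt
  have := key ((x - Filter.limsup v Filter.atTop)/2) (by linarith)
  linarith

lemma cesaro_pos {P : Matrix S S ℝ} (hP0 : ∀ i j, 0 ≤ P i j) (hP1 : ∀ i, ∑ j, P i j = 1)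
    (hirr : MatIrreducible P) (z : S) :
    ∃ ε : ℝ, 0 < ε ∧ ∀ᶠ n : ℕ in atTop, ε * n ≤ ∑ t ∈ Finset.range n, (P ^ t) z z := by
  classical
  -- choose hitting times
  choose m hm0 hmpos using fun i => hirr i z
  set M0 : ℕ := Finset.univ.sup' Finset.univ_nonempty m with hM0
  set M : ℕ := M0 + 1 with hMdef
  have hM : 0 < M := Nat.succ_pos _
  set card : ℕ := Fintype.card S with hcard
  have hcardpos : (0:ℝ) < card := by
    have : 0 < Fintype.card S := Fintype.card_pos
    exact_mod_cast this
  set δ0 : ℝ := Finset.univ.inf' Finset.univ_nonempty (fun i => (P ^ m i) i z) with hδ0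
  have hδ0pos : 0 < δ0 := by
    rw [hδ0, Finset.lt_inf'_iff]
    intro i _
    exact hmpos i
  set ε' : ℝ := δ0 / card with hε'
  have hε'pos : 0 < ε' := div_pos hδ0pos hcardpos
  -- block claim
  have block : ∀ n0 : ℕ, ∃ s : ℕ, n0 ≤ s ∧ s < n0 + M ∧ ε' ≤ (P ^ s) z z := by
    intro n0
    -- choose i with (P^n0) z i ≥ 1/card
    have hex : ∃ i : S, (1:ℝ)/card ≤ (P ^ n0) z i := by
      by_contra hcon
      push_neg at hcon
      have hsum := pow_row_sum hP1 n0 z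
      have : (1:ℝ) < 1 := by
        calc (1:ℝ) = ∑ j, (P ^ n0) z j := hsum.symm
          _ < ∑ _j : S, (1:ℝ)/card :=
            Finset.sum_lt_sum_of_nonempty Finset.univ_nonempty fun j _ => hcon j
          _ = card * ((1:ℝ)/card) := by
            rw [Finset.sum_const, Finset.card_univ]; simp [hcard, nsmul_eq_mul]
          _ = 1 := by field_simp
      linarith
    obtain ⟨i, hi⟩ := hex
    refine ⟨n0 + m i, Nat.le_add_right _ _, ?_, ?_⟩
    · have : m i ≤ M0 := Finset.le_sup' m (Finset.mem_univ i)
      omega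
    · have hmul : (P ^ n0) z i * (P ^ m i) i z ≤ (P ^ (n0 + m i)) z z := by
        rw [pow_add, Matrix.mul_apply]
        refine Finset.single_le_sum (f := fun k => (P ^ n0) z k * (P ^ m i) k z)
          (fun k _ => mul_nonneg (pow_entry_nonneg hP0 _ _ _) (pow_entry_nonneg hP0 _ _ _))
          (Finset.mem_univ i)
      refine le_trans ?_ hmul
      rw [hε']
      have h1 : δ0 ≤ (P ^ m i) i z := Finset.inf'_le _ (Finset.mem_univ i)
      calc δ0 / card = (1/card) * δ0 := by ring
        _ ≤ (P ^ n0) z i * (P ^ m i) i z := by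
          apply mul_le_mul hi h1 hδ0pos.le (pow_entry_nonneg hP0 _ _ _)
  -- F grows by ε' every M steps
  set F : ℕ → ℝ := fun n => ∑ t ∈ Finset.range n, (P ^ t) z z with hF
  have hFmono : Monotone F := by
    intro a b hab
    exact Finset.sum_le_sum_of_subset_of_nonneg (Finset.range_subset_range.2 hab)
      (fun t _ _ => pow_entry_nonneg hP0 t z z)
  have hstep : ∀ n : ℕ, F n + ε' ≤ F (n + M) := by
    intro n
    obtain ⟨s, hs1, hs2, hs3⟩ := block n
    have hsplit : F (n + M) = F n + ∑ t ∈ Finset.Ico n (n + M), (P ^ t) z z := by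
      rw [hF]
      simp only [Finset.range_eq_Ico]
      rw [← Finset.sum_Ico_consecutive _ (Nat.zero_le n) (Nat.le_add_right n M)]
    rw [hsplit]
    have : ε' ≤ ∑ t ∈ Finset.Ico n (n + M), (P ^ t) z z := by
      refine le_trans hs3 ?_
      refine Finset.single_le_sum (f := fun t => (P ^ t) z z)
        (fun t _ => pow_entry_nonneg hP0 t z z) ?_
      rw [Finset.mem_Ico]; exact ⟨hs1, hs2⟩
    linarith
  have hind : ∀ K : ℕ, ε' * K ≤ F (K * M) := by
    intro K
    induction K with
    | zero => simp [hF]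
    | succ K ih =>
      have := hstep (K * M)
      have hKM : (K + 1) * M = K * M + M := by ring
      rw [hKM]
      push_cast
      calc ε' * (K + 1) = ε' * K + ε' := by ring
        _ ≤ F (K * M) + ε' := by linarith
        _ ≤ F (K * M + M) := hstep (K * M)
  -- conclude
  refine ⟨ε' / (2 * M), div_pos hε'pos (by positivity), ?_⟩
  filter_upwards [Filter.eventually_ge_atTop (2 * M)] with n hn
  have hK : ε' * (n / M : ℕ) ≤ F n := by
    refine le_trans (hind (n / M)) (hFmono ?_)
    exact Nat.div_mul_le_self n M
  have hdiv : (n:ℝ) - M < ((n / M : ℕ) : ℝ) * M := by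
    have h1 : n / M * M + M > n := by
      have h2 := Nat.div_add_mod' n M
      have h3 := Nat.mod_lt n hM
      omega
    have := (Nat.cast_lt (α := ℝ)).2 h1
    push_cast at this
    have hMcast : (M:ℝ) = (M0:ℝ) + 1 := by rw [hMdef]; push_cast; ring
    rw [hMcast] at this ⊢
    linarith
  have hMpos : (0:ℝ) < M := by exact_mod_cast hM
  have hnM : (2 * M : ℝ) ≤ n := by exact_mod_cast hn
  -- ε'/(2M) * n ≤ ε' * (n/M : ℕ)
  have : ε' / (2 * M) * n ≤ ε' * ((n / M : ℕ) : ℝ) := by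
    rw [div_mul_eq_mul_div, div_le_iff₀ (by positivity)]
    have h4 : (n:ℝ) ≤ 2 * (((n / M : ℕ) : ℝ) * M) := by nlinarith
    nlinarith [hε'pos.le]
  linarith

lemma double_sum_ite (s : Finset S) (t : S → Finset S) (F : S → S → ℝ) :
    ∑ j ∈ s, ∑ k ∈ t j, F j k
      = ∑ j, ∑ k, if j ∈ s ∧ k ∈ t j then F j k else 0 := by
  classical
  have h1 : ∀ j, (∑ k, if j ∈ s ∧ k ∈ t j then F j k else 0)
      = if j ∈ s then ∑ k ∈ t j, F j k else 0 := by
    intro j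
    by_cases hj : j ∈ s
    · simp only [hj, true_and, if_true]
      rw [Finset.sum_ite_mem, Finset.univ_inter]
    · simp [hj]
  rw [Finset.sum_congr rfl fun j _ => h1 j]
  rw [Finset.sum_ite_mem, Finset.univ_inter]

lemma sum_subtree_delta (T : SFTree S) (i : S) (f w : S → ℝ) :
    ∑ j ∈ T.subtree i, f j * (∑ k ∈ T.delta i j, w k)
      = ∑ k ∈ T.desc i, (∑ s ∈ T.subtree k, f s) * w k := by
  classical
  have lhs : ∑ j ∈ T.subtree i, f j * (∑ k ∈ T.delta i j, w k)
      = ∑ j ∈ T.subtree i, ∑ k ∈ T.delta i j, f j * w k := by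
    refine Finset.sum_congr rfl fun j _ => ?_
    rw [Finset.mul_sum]
  have rhs : ∑ k ∈ T.desc i, (∑ s ∈ T.subtree k, f s) * w k
      = ∑ k ∈ T.desc i, ∑ j ∈ T.subtree k, f j * w k := by
    refine Finset.sum_congr rfl fun k _ => ?_
    rw [Finset.sum_mul]
  rw [lhs, rhs]
  conv_lhs => rw [double_sum_ite]
  conv_rhs => rw [double_sum_ite]
  conv_lhs => rw [Finset.sum_comm]
  refine Finset.sum_congr rfl fun k _ => Finset.sum_congr rfl fun j _ => ?_
  have := T.swap_cond (i := i) (j := j) (k := k)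
  by_cases h : j ∈ T.subtree i ∧ k ∈ T.delta i j
  · rw [if_pos h, if_pos (this.1 h)]
  · rw [if_neg h, if_neg (fun hh => h (this.2 hh))]

variable (M : MDP S A) (T : SFTree S)

lemma ptail_nonneg (i : S) (a : A) (k : S) : 0 ≤ M.ptail T i a k :=
  Finset.sum_nonneg fun s _ => M.p_nonneg i a s

lemma star_root (w : S → ℝ) (a : A) :
    ∑ j, M.p T.root a j * (∑ k ∈ T.delta T.root j, w k)
      = ∑ k ∈ T.desc T.root, M.ptail T T.root a k * w k := by
  have h := sum_subtree_delta T T.root (fun j => M.p T.root a j) w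
  rw [T.subtree_root] at h
  rw [h]
  rfl

lemma star_ne (hsf : M.IsSkipFree T) (w : S → ℝ) (a : A) {i : S} (hi : i ≠ T.root) :
    ∑ j, M.p i a j * (∑ k ∈ T.delta T.root j, w k)
      = (∑ k ∈ T.delta T.root i, w k) - M.p i a (T.parent i) * w i
        + ∑ k ∈ T.desc i, M.ptail T i a k * w k := by
  classical
  set H : S → ℝ := fun j => ∑ k ∈ T.delta T.root j, w k with hH
  set s : Finset S := insert (T.parent i) (T.subtree i) with hs
  have hzero : ∀ j ∈ Finset.univ, j ∉ s → M.p i a j * H j = 0 := by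
    intro j _ hj
    rcases eq_or_ne (M.p i a j) 0 with h | h
    · rw [h, zero_mul]
    · exfalso
      rcases hsf i hi a j h with h' | h'
      · exact hj (by rw [hs, h']; exact Finset.mem_insert_self _ _)
      · exact hj (by rw [hs]; exact Finset.mem_insert_of_mem h')
  have hsub : ∑ j ∈ s, M.p i a j * H j = ∑ j, M.p i a j * H j :=
    Finset.sum_subset (Finset.subset_univ s) hzero
  have hone : ∑ j ∈ s, M.p i a j = 1 := by
    rw [← M.p_sum_one i a]
    refine Finset.sum_subset (Finset.subset_univ s) ?_
    intro j _ hj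
    rcases eq_or_ne (M.p i a j) 0 with h | h
    · exact h
    · exfalso
      rcases hsf i hi a j h with h' | h'
      · exact hj (by rw [hs, h']; exact Finset.mem_insert_self _ _)
      · exact hj (by rw [hs]; exact Finset.mem_insert_of_mem h')
  have hpns := T.parent_not_mem_subtree hi
  rw [Finset.sum_insert hpns] at hsub hone
  have hHpar : H (T.parent i) = H i - w i := by
    rw [hH]
    simp only
    rw [T.delta_root_parent hi, Finset.sum_erase_eq_sub (T.self_mem_delta_root hi)]
  have hsplit : ∑ j ∈ T.subtree i, M.p i a j * H j
      = (∑ k ∈ T.desc i, M.ptail T i a k * w k) + (∑ j ∈ T.subtree i, M.p i a j) * H i := by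
    have h1 : ∀ j ∈ T.subtree i, M.p i a j * H j
        = M.p i a j * (∑ k ∈ T.delta i j, w k) + M.p i a j * H i := by
      intro j hj
      rw [hH]
      simp only
      rw [T.delta_split hi hj w, mul_add]
    rw [Finset.sum_congr rfl h1, Finset.sum_add_distrib, sum_subtree_delta, ← Finset.sum_mul]
    rfl
  rw [← hsub, hHpar, hsplit]
  have htail : ∑ j ∈ T.subtree i, M.p i a j = M.ptail T i a i := rfl
  rw [htail] at hone ⊢
  show M.p i a (T.parent i) * (H i - w i)
      + ((∑ k ∈ T.desc i, M.ptail T i a k * w k) + M.ptail T i a i * H i)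
    = H i - M.p i a (T.parent i) * w i + ∑ k ∈ T.desc i, M.ptail T i a k * w k
  linear_combination H i * hone


lemma Pmat_nonneg (d : S → A) : ∀ i j, 0 ≤ M.Pmat d i j := fun i j => M.p_nonneg i (d i) j
lemma Pmat_rowsum (d : S → A) : ∀ i, ∑ j, M.Pmat d i j = 1 := fun i => M.p_sum_one i (d i)

lemma inv_tendsto : Filter.Tendsto (fun n : ℕ => (n:ℝ)⁻¹) atTop (nhds 0) :=
  tendsto_inv_atTop_nhds_zero_nat

lemma avg_eq (d : S → A) (H : S → ℝ) (x : ℝ)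
    (heval : ∀ i, M.cvec d i = x + H i - (M.Pmat d).mulVec H i) (i : S) :
    M.avgCost d i = x := by
  set P := M.Pmat d with hP
  set c := M.cvec d with hc
  set CH : ℝ := Finset.univ.sup' Finset.univ_nonempty (fun j => |H j|) with hCH
  have hCHle : ∀ j, |H j| ≤ CH := fun j => Finset.le_sup' (fun j => |H j|) (Finset.mem_univ j)
  set v : ℕ → ℝ := fun n => (n:ℝ)⁻¹ * ∑ t ∈ Finset.range n, (P ^ t).mulVec c i with hv
  have hvev : ∀ᶠ n : ℕ in atTop, ‖v n - x‖ ≤ 2 * CH * (n:ℝ)⁻¹ := by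
    filter_upwards [Filter.eventually_ge_atTop 1] with n hn
    have hn0 : (0:ℝ) < n := by exact_mod_cast hn
    have hinv : (n:ℝ)⁻¹ * n = 1 := inv_mul_cancel₀ hn0.ne'
    have hps := partial_sum_eq (Pmat_rowsum M d) heval n i
    have hb1 : |H i| ≤ CH := hCHle i
    have hb2 : |(P ^ n).mulVec H i| ≤ CH :=
      mulVec_abs_le (pow_entry_nonneg (Pmat_nonneg M d) n) (pow_row_sum (Pmat_rowsum M d) n)
        hCHle i
    have : v n - x = (n:ℝ)⁻¹ * (H i - (P ^ n).mulVec H i) := by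
      rw [hv]
      simp only
      rw [hps]
      field_simp
      ring
    rw [this, Real.norm_eq_abs, abs_mul, abs_inv, Nat.abs_cast]
    have habs : |H i - (P ^ n).mulVec H i| ≤ 2 * CH := by
      calc |H i - (P ^ n).mulVec H i| ≤ |H i| + |(P ^ n).mulVec H i| := abs_sub _ _
        _ ≤ 2 * CH := by linarith
    calc (n:ℝ)⁻¹ * |H i - (P ^ n).mulVec H i| ≤ (n:ℝ)⁻¹ * (2 * CH) := by
          exact mul_le_mul_of_nonneg_left habs (by positivity)
      _ = 2 * CH * (n:ℝ)⁻¹ := by ring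
  have hg0 : Filter.Tendsto (fun n : ℕ => 2 * CH * (n:ℝ)⁻¹) atTop (nhds 0) := by
    have := inv_tendsto.const_mul (2 * CH)
    simpa using this
  have htend : Filter.Tendsto (fun n => v n - x) atTop (nhds 0) :=
    squeeze_zero_norm' hvev hg0
  have : Filter.Tendsto v atTop (nhds x) := by
    have := htend.add_const x
    simpa using this
  exact this.limsup_eq

lemma avg_ge (d : S → A) (H : S → ℝ) (x uu ε : ℝ) (z : S)
    (hc : ∀ i, x + H i - (M.Pmat d).mulVec H i + uu * (if i = z then 1 else 0) ≤ M.cvec d i)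
    (huu : 0 ≤ uu) (hε : 0 ≤ ε)
    (hces : ∀ᶠ n : ℕ in atTop, ε * n ≤ ∑ t ∈ Finset.range n, (M.Pmat d ^ t) z z) :
    x + uu * ε ≤ M.avgCost d z := by
  set P := M.Pmat d with hP
  set c := M.cvec d with hc'
  set CH : ℝ := Finset.univ.sup' Finset.univ_nonempty (fun j => |H j|) with hCH
  have hCHle : ∀ j, |H j| ≤ CH := fun j => Finset.le_sup' (fun j => |H j|) (Finset.mem_univ j)
  set Cc : ℝ := Finset.univ.sup' Finset.univ_nonempty (fun j => |c j|) with hCc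
  have hCcle : ∀ j, |c j| ≤ Cc := fun j => Finset.le_sup' (fun j => |c j|) (Finset.mem_univ j)
  have hCc0 : 0 ≤ Cc := le_trans (abs_nonneg _) (hCcle z)
  set v : ℕ → ℝ := fun n => (n:ℝ)⁻¹ * ∑ t ∈ Finset.range n, (P ^ t).mulVec c z with hv
  have hvB : ∀ n, v n ≤ Cc := by
    intro n
    rcases Nat.eq_zero_or_pos n with h | h
    · subst h; simp [hv, hCc0]
    · have hn0 : (0:ℝ) < n := by exact_mod_cast h
      have hsum : |∑ t ∈ Finset.range n, (P ^ t).mulVec c z| ≤ n * Cc := by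
        calc |∑ t ∈ Finset.range n, (P ^ t).mulVec c z|
            ≤ ∑ t ∈ Finset.range n, |(P ^ t).mulVec c z| := Finset.abs_sum_le_sum_abs _ _
          _ ≤ ∑ _t ∈ Finset.range n, Cc := Finset.sum_le_sum fun t _ =>
              mulVec_abs_le (pow_entry_nonneg (Pmat_nonneg M d) t)
                (pow_row_sum (Pmat_rowsum M d) t) hCcle z
          _ = n * Cc := by rw [Finset.sum_const, Finset.card_range, nsmul_eq_mul]
      have := (abs_le.mp hsum).2
      calc v n ≤ (n:ℝ)⁻¹ * (n * Cc) := by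
            exact mul_le_mul_of_nonneg_left this (by positivity)
        _ = Cc := by field_simp
  refine le_limsup_of v Cc hvB _ ?_
  intro ε' hε'
  have hevsmall : ∀ᶠ n : ℕ in atTop, 2 * CH * (n:ℝ)⁻¹ < ε' := by
    have hg0 : Filter.Tendsto (fun n : ℕ => 2 * CH * (n:ℝ)⁻¹) atTop (nhds 0) := by
      have := inv_tendsto.const_mul (2 * CH)
      simpa using this
    exact hg0.eventually_lt_const hε'
  filter_upwards [hces, Filter.eventually_ge_atTop 1, hevsmall] with n h1 hn h3
  have hn0 : (0:ℝ) < n := by exact_mod_cast hn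
  have hinv : (n:ℝ)⁻¹ * n = 1 := inv_mul_cancel₀ hn0.ne'
  have hps := partial_sum_ge (Pmat_nonneg M d) (Pmat_rowsum M d) z hc n z
  have hb2 : |(P ^ n).mulVec H z| ≤ CH :=
    mulVec_abs_le (pow_entry_nonneg (Pmat_nonneg M d) n) (pow_row_sum (Pmat_rowsum M d) n)
      hCHle z
  have hb1 : |H z| ≤ CH := hCHle z
  set D : ℝ := H z - (P ^ n).mulVec H z with hD
  have hDlb : -(2 * CH) ≤ D := by
    have := (abs_le.mp hb1).1
    have := (abs_le.mp hb2).2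
    rw [hD]; linarith [(abs_le.mp hb1).1, (abs_le.mp hb2).2]
  have hS : uu * (ε * n) ≤ uu * ∑ t ∈ Finset.range n, (P ^ t) z z :=
    mul_le_mul_of_nonneg_left h1 huu
  have hlow : (n:ℝ) * x + D + uu * (ε * n) ≤ ∑ t ∈ Finset.range n, (P ^ t).mulVec c z := by
    linarith [hps, hD.le, hD.ge]
  have : x + uu * ε + (n:ℝ)⁻¹ * D ≤ v n := by
    rw [hv]
    simp only
    calc x + uu * ε + (n:ℝ)⁻¹ * D
        = (n:ℝ)⁻¹ * ((n:ℝ) * x + D + uu * (ε * n)) := by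
          field_simp; ring
      _ ≤ (n:ℝ)⁻¹ * ∑ t ∈ Finset.range n, (P ^ t).mulVec c z :=
          mul_le_mul_of_nonneg_left hlow (by positivity)
  have hsmall : -ε' ≤ (n:ℝ)⁻¹ * D := by
    have h4 : (n:ℝ)⁻¹ * (-(2*CH)) ≤ (n:ℝ)⁻¹ * D := mul_le_mul_of_nonneg_left hDlb (by positivity)
    have h5 : (n:ℝ)⁻¹ * (2 * CH) < ε' := by
      calc (n:ℝ)⁻¹ * (2 * CH) = 2 * CH * (n:ℝ)⁻¹ := by ring
        _ < ε' := h3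
    linarith
  linarith


end SFAux

end AuxLemmas

/-- Theorem 1(i). For the skip-free algorithm (hypotheses encode one
iteration step with `x = g n`, producing `y n`, `t n`, the minimising policy `d (n+1)`, the
minimal value `u n`, and `g (n+1) = g n + u n`), for every `n`: `g n = g(d n)`, and either
`g (n+1) < g n` or `g (n+1) = g n`; in the latter case `g (n+1)` is the optimal average
cost, `d (n+1)` is average cost optimal, and `(g (n+1), h)` with
`h j = ∑_{i ∈ Δ(root,j)} y n i` satisfies the average cost optimality equations. -/
theorem stmt10 {S A : Type*} [Fintype S] [DecidableEq S] [Fintype A] [Nonempty A]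
    (T : SFTree S) (M : MDP S A)
    (hsf : M.IsSkipFree T) (hrec : IsRecurrentModel M)
    (h00 : ∀ a : A, M.p T.root a T.root < 1)
    (hpar : ∀ i, i ≠ T.root → ∀ a : A, 0 < M.p i a (T.parent i))
    (d : ℕ → S → A) (g : ℕ → ℝ) (y t : ℕ → S → ℝ) (u : ℕ → ℝ)
    (hg0 : g 0 = M.avgCost (d 0) T.root)
    (hy : ∀ n, ∀ i, i ≠ T.root →
      y n i = ⨅ a : A, (M.c i a - g n + ∑ k ∈ T.desc i, M.ptail T i a k * y n k)
          / M.p i a (T.parent i))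
    (hd : ∀ n, ∀ i, i ≠ T.root →
      (M.c i (d (n + 1) i) - g n + ∑ k ∈ T.desc i, M.ptail T i (d (n + 1) i) k * y n k)
          / M.p i (d (n + 1) i) (T.parent i) = y n i)
    (ht : ∀ n, ∀ i, i ≠ T.root →
      t n i = (1 + ∑ k ∈ T.desc i, M.ptail T i (d (n + 1) i) k * t n k)
          / M.p i (d (n + 1) i) (T.parent i))
    (hu : ∀ n, u n = ⨅ a : A,
      (M.c T.root a - g n + ∑ k ∈ T.desc T.root, M.ptail T T.root a k * y n k)
        / (1 + ∑ k ∈ T.desc T.root, M.ptail T T.root a k * t n k))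
    (hd0 : ∀ n,
      (M.c T.root (d (n + 1) T.root) - g n
          + ∑ k ∈ T.desc T.root, M.ptail T T.root (d (n + 1) T.root) k * y n k)
        / (1 + ∑ k ∈ T.desc T.root, M.ptail T T.root (d (n + 1) T.root) k * t n k) = u n)
    (hG : ∀ n, g (n + 1) = g n + u n) :
    ∀ n : ℕ,
      g n = M.avgCost (d n) T.root
      ∧ (g (n + 1) < g n ∨ g (n + 1) = g n)
      ∧ (g (n + 1) = g n →
          (g (n + 1) = ⨅ d' : S → A, M.avgCost d' T.root)
          ∧ (M.avgCost (d (n + 1)) T.root = ⨅ d' : S → A, M.avgCost d' T.root)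
          ∧ (∀ i, (∑ k ∈ T.delta T.root i, y n k)
              = ⨅ a : A, (M.c i a - g (n + 1)
                  + ∑ j, M.p i a j * (∑ k ∈ T.delta T.root j, y n k)))) := by
  classical
  haveI : Nonempty S := ⟨T.root⟩
  -- positivity of t
  have htpos : ∀ n i, i ≠ T.root → 0 < t n i := by
    intro n
    suffices h : ∀ (N : ℕ) (i : S), (T.desc i).card ≤ N → i ≠ T.root → 0 < t n i by
      intro i hi; exact h (T.desc i).card i le_rfl hi
    intro N
    induction N with
    | zero =>
      intro i hcard hi
      have hempty : T.desc i = ∅ := Finset.card_eq_zero.mp (Nat.le_zero.mp hcard)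
      rw [ht n i hi, hempty]
      simp only [Finset.sum_empty, add_zero]
      exact div_pos one_pos (hpar i hi _)
    | succ N ihN =>
      intro i hcard hi
      rw [ht n i hi]
      refine div_pos ?_ (hpar i hi _)
      have hsum : 0 ≤ ∑ k ∈ T.desc i, M.ptail T i (d (n+1) i) k * t n k := by
        refine Finset.sum_nonneg fun k hk => ?_
        have hk1 : (T.desc k).card ≤ N := by
          have := Finset.card_lt_card (T.desc_ssubset hk)
          omega
        exact mul_nonneg (SFAux.ptail_nonneg M T i _ k)
          (ihN k hk1 (T.ne_root_of_mem_desc hk)).le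
      linarith
  have hDpos : ∀ n (a : A), 0 < 1 + ∑ k ∈ T.desc T.root, M.ptail T T.root a k * t n k := by
    intro n a
    have : 0 ≤ ∑ k ∈ T.desc T.root, M.ptail T T.root a k * t n k :=
      Finset.sum_nonneg fun k hk =>
        mul_nonneg (SFAux.ptail_nonneg M T _ _ _) (htpos n k (T.ne_root_of_mem_desc hk)).le
    linarith
  -- Part A : average cost of d (n+1) is g (n+1), from every starting state
  have hA : ∀ n i0, M.avgCost (d (n+1)) i0 = g (n+1) := by
    intro n i0
    set w : S → ℝ := fun k => y n k - u n * t n k with hwdef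
    refine SFAux.avg_eq M (d (n+1)) (fun j => ∑ k ∈ T.delta T.root j, w k) (g (n+1)) ?_ i0
    intro i
    have hmv : (M.Pmat (d (n+1))).mulVec (fun j => ∑ k ∈ T.delta T.root j, w k) i
        = ∑ j, M.p i (d (n+1) i) j * (∑ k ∈ T.delta T.root j, w k) := rfl
    have hcv : M.cvec (d (n+1)) i = M.c i (d (n+1) i) := rfl
    rw [hcv, hmv]
    beta_reduce
    by_cases hi : i = T.root
    · subst hi
      rw [SFAux.star_root M T w (d (n+1) T.root)]
      have hD := hDpos n (d (n+1) T.root)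
      have hnum : M.c T.root (d (n+1) T.root) - g n
          + ∑ k ∈ T.desc T.root, M.ptail T T.root (d (n+1) T.root) k * y n k
          = u n * (1 + ∑ k ∈ T.desc T.root, M.ptail T T.root (d (n+1) T.root) k * t n k) :=
        (div_eq_iff hD.ne').mp (hd0 n)
      have hsw : ∑ k ∈ T.desc T.root, M.ptail T T.root (d (n+1) T.root) k * w k
          = (∑ k ∈ T.desc T.root, M.ptail T T.root (d (n+1) T.root) k * y n k)
            - u n * ∑ k ∈ T.desc T.root, M.ptail T T.root (d (n+1) T.root) k * t n k := by
        rw [hwdef, Finset.mul_sum, ← Finset.sum_sub_distrib]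
        exact Finset.sum_congr rfl fun k _ => by ring
      have hH0 : ∑ k ∈ T.delta T.root T.root, w k = 0 := by
        rw [T.delta_root_root, Finset.sum_empty]
      rw [hH0, hsw, hG n]
      linarith [hnum]
    · rw [SFAux.star_ne M T hsf w (d (n+1) i) hi]
      have hp := hpar i hi (d (n+1) i)
      have hyeq : M.c i (d (n+1) i) - g n + ∑ k ∈ T.desc i, M.ptail T i (d (n+1) i) k * y n k
          = y n i * M.p i (d (n+1) i) (T.parent i) := (div_eq_iff hp.ne').mp (hd n i hi)
      have hteq : t n i * M.p i (d (n+1) i) (T.parent i)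
          = 1 + ∑ k ∈ T.desc i, M.ptail T i (d (n+1) i) k * t n k := by
        rw [ht n i hi]; field_simp
      have hsw : ∑ k ∈ T.desc i, M.ptail T i (d (n+1) i) k * w k
          = (∑ k ∈ T.desc i, M.ptail T i (d (n+1) i) k * y n k)
            - u n * ∑ k ∈ T.desc i, M.ptail T i (d (n+1) i) k * t n k := by
        rw [hwdef, Finset.mul_sum, ← Finset.sum_sub_distrib]
        exact Finset.sum_congr rfl fun k _ => by ring
      have hwi : w i = y n i - u n * t n i := rfl
      rw [hsw, hwi, hG n]
      linear_combination hyeq + (u n) * hteq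
  -- g n is the average cost of d n
  have hP1 : ∀ n, g n = M.avgCost (d n) T.root := by
    intro n
    cases n with
    | zero => exact hg0
    | succ m => exact (hA m T.root).symm
  -- basic inequalities from the infima
  have hyle : ∀ n i, i ≠ T.root → ∀ a : A,
      y n i * M.p i a (T.parent i)
        ≤ M.c i a - g n + ∑ k ∈ T.desc i, M.ptail T i a k * y n k := by
    intro n i hi a
    have h1 : y n i ≤ (M.c i a - g n + ∑ k ∈ T.desc i, M.ptail T i a k * y n k)
        / M.p i a (T.parent i) := by
      rw [hy n i hi]
      exact ciInf_le (Set.finite_range _).bddBelow a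
    exact (le_div_iff₀ (hpar i hi a)).mp h1
  have hule : ∀ n (a : A),
      u n * (1 + ∑ k ∈ T.desc T.root, M.ptail T T.root a k * t n k)
        ≤ M.c T.root a - g n + ∑ k ∈ T.desc T.root, M.ptail T T.root a k * y n k := by
    intro n a
    have h1 : u n ≤ (M.c T.root a - g n + ∑ k ∈ T.desc T.root, M.ptail T T.root a k * y n k)
        / (1 + ∑ k ∈ T.desc T.root, M.ptail T T.root a k * t n k) := by
      rw [hu n]
      exact ciInf_le (Set.finite_range _).bddBelow a
    exact (le_div_iff₀ (hDpos n a)).mp h1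
  -- Part B : u n ≤ 0
  have hB : ∀ n, u n ≤ 0 := by
    intro n
    by_contra hpos
    push_neg at hpos
    have hineq : ∀ i, g n + (∑ k ∈ T.delta T.root i, y n k)
        - (M.Pmat (d n)).mulVec (fun j => ∑ k ∈ T.delta T.root j, y n k) i
        + u n * (if i = T.root then 1 else 0) ≤ M.cvec (d n) i := by
      intro i
      have hmv : (M.Pmat (d n)).mulVec (fun j => ∑ k ∈ T.delta T.root j, y n k) i
          = ∑ j, M.p i (d n i) j * (∑ k ∈ T.delta T.root j, y n k) := rfl
      have hcv : M.cvec (d n) i = M.c i (d n i) := rfl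
      rw [hmv, hcv]
      by_cases hi : i = T.root
      · subst hi
        rw [if_pos rfl, SFAux.star_root M T (y n) (d n T.root)]
        have hH0 : ∑ k ∈ T.delta T.root T.root, y n k = 0 := by
          rw [T.delta_root_root, Finset.sum_empty]
        rw [hH0]
        have hDge : 0 ≤ ∑ k ∈ T.desc T.root, M.ptail T T.root (d n T.root) k * t n k :=
          Finset.sum_nonneg fun k hk =>
            mul_nonneg (SFAux.ptail_nonneg M T _ _ _) (htpos n k (T.ne_root_of_mem_desc hk)).le
        have h1 := hule n (d n T.root)
        nlinarith
      · rw [if_neg hi, SFAux.star_ne M T hsf (y n) (d n i) hi]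
        have h1 := hyle n i hi (d n i)
        linarith
    obtain ⟨ε, hεpos, hces⟩ := SFAux.cesaro_pos (SFAux.Pmat_nonneg M (d n))
      (SFAux.Pmat_rowsum M (d n)) (hrec (d n)) T.root
    have hge := SFAux.avg_ge M (d n) (fun j => ∑ k ∈ T.delta T.root j, y n k)
      (g n) (u n) ε T.root hineq hpos.le hεpos.le hces
    have hgn := hP1 n
    nlinarith [mul_pos hpos hεpos]
  intro n
  refine ⟨hP1 n, ?_, ?_⟩
  · have hle : g (n+1) ≤ g n := by have := hB n; have := hG n; linarith
    exact lt_or_eq_of_le hle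
  · intro heq
    have hu0 : u n = 0 := by have := hG n; linarith
    -- super-optimality for any policy
    have hsup : ∀ (d' : S → A) (i : S),
        g (n+1) + (∑ k ∈ T.delta T.root i, y n k)
          - (M.Pmat d').mulVec (fun j => ∑ k ∈ T.delta T.root j, y n k) i
          + (0:ℝ) * (if i = T.root then 1 else 0) ≤ M.cvec d' i := by
      intro d' i
      have hmv : (M.Pmat d').mulVec (fun j => ∑ k ∈ T.delta T.root j, y n k) i
          = ∑ j, M.p i (d' i) j * (∑ k ∈ T.delta T.root j, y n k) := rfl
      have hcv : M.cvec d' i = M.c i (d' i) := rfl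
      rw [hmv, hcv, zero_mul, add_zero]
      by_cases hi : i = T.root
      · subst hi
        rw [SFAux.star_root M T (y n) (d' T.root)]
        have hH0 : ∑ k ∈ T.delta T.root T.root, y n k = 0 := by
          rw [T.delta_root_root, Finset.sum_empty]
        rw [hH0]
        have h1 := hule n (d' T.root)
        rw [hu0, zero_mul] at h1
        linarith [heq, hG n]
      · rw [SFAux.star_ne M T hsf (y n) (d' i) hi]
        have h1 := hyle n i hi (d' i)
        have : g (n+1) = g n := heq
        linarith
    have hgopt : ∀ d' : S → A, g (n+1) ≤ M.avgCost d' T.root := by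
      intro d'
      have hces0 : ∀ᶠ m : ℕ in atTop, (0:ℝ) * m ≤ ∑ s ∈ Finset.range m, (M.Pmat d' ^ s) T.root T.root := by
        filter_upwards with m
        rw [zero_mul]
        exact Finset.sum_nonneg fun s _ =>
          SFAux.pow_entry_nonneg (SFAux.Pmat_nonneg M d') s T.root T.root
      have := SFAux.avg_ge M d' (fun j => ∑ k ∈ T.delta T.root j, y n k)
        (g (n+1)) 0 0 T.root (hsup d') le_rfl le_rfl hces0
      simpa using this
    have hIopt : (⨅ d' : S → A, M.avgCost d' T.root) = g (n+1) := by
      refine le_antisymm ?_ (le_ciInf hgopt)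
      exact (ciInf_le (Set.finite_range _).bddBelow (d (n+1))).trans_eq (hA n T.root)
    refine ⟨hIopt.symm, (hA n T.root).trans hIopt.symm, ?_⟩
    -- optimality equations
    intro i
    by_cases hi : i = T.root
    · subst hi
      have hH0 : ∑ k ∈ T.delta T.root T.root, y n k = 0 := by
        rw [T.delta_root_root, Finset.sum_empty]
      rw [hH0]
      refine le_antisymm ?_ ?_
      · refine le_ciInf fun a => ?_
        rw [SFAux.star_root M T (y n) a]
        have h1 := hule n a
        rw [hu0, zero_mul] at h1
        linarith [heq, hG n]
      · refine (ciInf_le (Set.finite_range _).bddBelow (d (n+1) T.root)).trans ?_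
        rw [SFAux.star_root M T (y n) (d (n+1) T.root)]
        have hD := hDpos n (d (n+1) T.root)
        have hnum := (div_eq_iff hD.ne').mp (hd0 n)
        rw [hu0, zero_mul] at hnum
        have : g (n+1) = g n := heq
        linarith
    · refine le_antisymm ?_ ?_
      · refine le_ciInf fun a => ?_
        rw [SFAux.star_ne M T hsf (y n) a hi]
        have h1 := hyle n i hi a
        have : g (n+1) = g n := heq
        linarith
      · refine (ciInf_le (Set.finite_range _).bddBelow (d (n+1) i)).trans ?_
        rw [SFAux.star_ne M T hsf (y n) (d (n+1) i) hi]
        have hp := hpar i hi (d (n+1) i)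
        have hnum := (div_eq_iff hp.ne').mp (hd n i hi)
        have : g (n+1) = g n := heq
        linarith
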